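/- With A, B isometries as above and T = [[0, AᴴB],[BᴴA, 0]], the pair (f, g) ∈ ℂ^m × ℂ^n satisfies T(f ⊕ g) = f ⊕ g if and only if Af = Bg. -/

import Mathlib

open Matrix

lemma aux_dot {ν p q : ℕ} (M : Matrix (Fin ν) (Fin p) ℂ) (N : Matrix (Fin ν) (Fin q) ℂ)
    (x : Fin p → ℂ) (y : Fin q → ℂ) :
    star (M.mulVec x) ⬝ᵥ N.mulVec y = star x ⬝ᵥ (Mᴴ * N).mulVec y := by
  rw [star_mulVec, dotProduct_mulVec, dotProduct_mulVec, vecMul_vecMul]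

lemma star_dot_self_zero {p : ℕ} (v : Fin p → ℂ) (h : star v ⬝ᵥ v = 0) : v = 0 := by
  have hs : ∑ i, Complex.normSq (v i) = 0 := by
    have := congrArg Complex.re h
    simpa [dotProduct, Complex.normSq_eq_conj_mul_self, Complex.re_sum, Complex.normSq_apply] using this
  funext i
  have := (Finset.sum_eq_zero_iff_of_nonneg (fun i _ => Complex.normSq_nonneg (v i))).mp hs i (Finset.mem_univ i)
  simpa using Complex.normSq_eq_zero.mp this

theorem stmt_4 {ν m n : ℕ} (A : Matrix (Fin ν) (Fin m) ℂ) (B : Matrix (Fin ν) (Fin n) ℂ)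
    (hA : Aᴴ * A = 1) (hB : Bᴴ * B = 1) (f : Fin m → ℂ) (g : Fin n → ℂ) :
    (fromBlocks 0 (Aᴴ * B) (Bᴴ * A) 0).mulVec (Sum.elim f g) = Sum.elim f g ↔
      A.mulVec f = B.mulVec g := by
  rw [fromBlocks_mulVec]
  constructor
  · intro h
    have h1 : (Aᴴ * B).mulVec g = f := by
      have := congrFun h
      funext i
      simpa [zero_mulVec] using this (Sum.inl i)
    have h2 : (Bᴴ * A).mulVec f = g := by
      have := congrFun h
      funext i
      simpa [zero_mulVec] using this (Sum.inr i)
    have key : star (A.mulVec f - B.mulVec g) ⬝ᵥ (A.mulVec f - B.mulVec g) = 0 := by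
      have e1 : star (A.mulVec f) ⬝ᵥ A.mulVec f = star f ⬝ᵥ f := by
        rw [aux_dot, hA, one_mulVec]
      have e2 : star (A.mulVec f) ⬝ᵥ B.mulVec g = star f ⬝ᵥ f := by
        rw [aux_dot, h1]
      have e3 : star (B.mulVec g) ⬝ᵥ A.mulVec f = star g ⬝ᵥ g := by
        rw [aux_dot, h2]
      have e4 : star (B.mulVec g) ⬝ᵥ B.mulVec g = star g ⬝ᵥ g := by
        rw [aux_dot, hB, one_mulVec]
      simp only [star_sub, sub_dotProduct, dotProduct_sub, e1, e2, e3, e4]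
      ring
    exact sub_eq_zero.mp (star_dot_self_zero _ key)
  · intro h
    funext i
    cases i with
    | inl i =>
      have : (Aᴴ * B).mulVec g = (Aᴴ * A).mulVec f := by
        rw [← mulVec_mulVec, ← mulVec_mulVec, h]
      simp [zero_mulVec, this, hA, one_mulVec]
    | inr i =>
      have : (Bᴴ * A).mulVec f = (Bᴴ * B).mulVec g := by
        rw [← mulVec_mulVec, ← mulVec_mulVec, h]
      simp [zero_mulVec, this, hB, one_mulVec]
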